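/- Let d, p be positive integers, let K : ℝ^d × ℝ^p → ℝ be twice continuously differentiable (jointly) with K(0, θ) = 0 for every θ ∈ ℝ^p, let θ₀ ∈ ℝ^p, set x = ∇ₜK(0, θ₀), and let t̂ : ℝ^p → ℝ^d be continuously differentiable on a neighborhood of θ₀ with t̂(θ₀) = 0 and ∇ₜK(t̂(θ), θ) = x for all θ in that neighborhood. Assume K''(0, θ₀) is positive definite. Then the p×p Hessian matrix at θ₀ of the map θ ↦ K(t̂(θ), θ) − ⟨t̂(θ), x⟩ equals −J(0, θ₀)ᵀ · K''(0, θ₀)⁻¹ · J(0, θ₀), where J(t, θ) is the d×p matrix of mixed partials ∂²K/∂θ_j∂t_i; moreover this Hessian is negative definite if and only if J(0, θ₀) has rank p. -/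

import Mathlib

open Matrix

/-- A real symmetric matrix is negative definite if `vᵀ S v < 0` for every
nonzero vector `v`. -/
def Matrix.IsNegDef {n : Type*} [Fintype n] (M : Matrix n n ℝ) : Prop :=
  M.IsSymm ∧ ∀ v : n → ℝ, v ≠ 0 → v ⬝ᵥ M *ᵥ v < 0

private lemma fderiv_clm_apply_comp
    {X G : Type*} [NormedAddCommGroup X] [NormedSpace ℝ X]
    [NormedAddCommGroup G] [NormedSpace ℝ G]
    {K : G → ℝ} {h : X → G} {h' : X →L[ℝ] G} {x₀ : X}
    (hK2 : DifferentiableAt ℝ (fderiv ℝ K) (h x₀))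
    (hh : HasFDerivAt h h' x₀) (v : G) (w : X) :
    fderiv ℝ (fun x => fderiv ℝ K (h x) v) x₀ w
      = fderiv ℝ (fderiv ℝ K) (h x₀) (h' w) v := by
  have h1 : HasFDerivAt (fun x => fderiv ℝ K (h x))
      ((fderiv ℝ (fderiv ℝ K) (h x₀)).comp h') x₀ := hK2.hasFDerivAt.comp x₀ hh
  have h2 : HasFDerivAt (fun x => fderiv ℝ K (h x) v)
      ((ContinuousLinearMap.apply ℝ ℝ v).comp ((fderiv ℝ (fderiv ℝ K) (h x₀)).comp h')) x₀ :=
    ((ContinuousLinearMap.apply ℝ ℝ v).hasFDerivAt).comp x₀ h1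
  rw [h2.fderiv]; rfl

private lemma pi_basis_sum {d : ℕ} (u : Fin d → ℝ) :
    ∑ k, u k • (Pi.single k 1 : Fin d → ℝ) = u := by
  funext j
  simp [Finset.sum_apply, Pi.single_apply]

private lemma clm_fst_expand {d p : ℕ} {M : Type*} [NormedAddCommGroup M] [NormedSpace ℝ M]
    (A : ((Fin d → ℝ) × (Fin p → ℝ)) →L[ℝ] M) (u : Fin d → ℝ) :
    A (u, 0) = ∑ k, u k • A (Pi.single k 1, 0) := by
  have hu : (u, (0 : Fin p → ℝ))
      = ∑ k, u k • ((Pi.single k 1 : Fin d → ℝ), (0 : Fin p → ℝ)) := by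
    refine Prod.ext ?_ ?_
    · rw [Prod.fst_sum]; simp [pi_basis_sum]
    · rw [Prod.snd_sum]; simp
  rw [hu, map_sum]
  refine Finset.sum_congr rfl fun k _ => ?_
  exact map_smul A _ _

private lemma clm_snd_expand {d p : ℕ} {M : Type*} [NormedAddCommGroup M] [NormedSpace ℝ M]
    (A : ((Fin d → ℝ) × (Fin p → ℝ)) →L[ℝ] M) (v : Fin p → ℝ) :
    A (0, v) = ∑ k, v k • A (0, Pi.single k 1) := by
  have hv : ((0 : Fin d → ℝ), v)
      = ∑ k, v k • ((0 : Fin d → ℝ), (Pi.single k 1 : Fin p → ℝ)) := by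
    refine Prod.ext ?_ ?_
    · rw [Prod.fst_sum]; simp
    · rw [Prod.snd_sum]; simp [pi_basis_sum]
  rw [hv, map_sum]
  refine Finset.sum_congr rfl fun k _ => ?_
  exact map_smul A _ _

private lemma clm_split {d p : ℕ} {M : Type*} [NormedAddCommGroup M] [NormedSpace ℝ M]
    (A : ((Fin d → ℝ) × (Fin p → ℝ)) →L[ℝ] M) (u : Fin d → ℝ) (v : Fin p → ℝ) :
    A (u, v) = A (u, 0) + A (0, v) := by
  rw [← map_add]
  simp

/-- in a well-specified model (`K(0,θ)=0`, `x = ∇ₜK(0,θ₀)`,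
`t̂(θ₀)=0`), the Hessian at `θ₀` of `θ ↦ K(t̂(θ),θ) − ⟨t̂(θ),x⟩` equals
`−J(0,θ₀)ᵀ K''(0,θ₀)⁻¹ J(0,θ₀)`, and it is negative definite iff
`J(0,θ₀)` has rank `p`. -/
theorem stmt5 (d p : ℕ) (hd : 0 < d) (hp : 0 < p)
    (K : (Fin d → ℝ) × (Fin p → ℝ) → ℝ) (hK : ContDiff ℝ 2 K)
    (hK0 : ∀ θ : Fin p → ℝ, K (0, θ) = 0)
    (θ₀ : Fin p → ℝ)
    (x : Fin d → ℝ)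
    (hx : ∀ i : Fin d, x i = fderiv ℝ (fun t => K (t, θ₀)) 0 (Pi.single i 1))
    (that : (Fin p → ℝ) → (Fin d → ℝ))
    (U : Set (Fin p → ℝ)) (hU : IsOpen U) (hθ₀U : θ₀ ∈ U)
    (hdiff : ContDiffOn ℝ 1 that U)
    (hthat0 : that θ₀ = 0)
    (hsaddle : ∀ θ ∈ U, ∀ i : Fin d,
      fderiv ℝ (fun t => K (t, θ)) (that θ) (Pi.single i 1) = x i)
    (H : Matrix (Fin d) (Fin d) ℝ)
    (hH : ∀ i j, H i j =
      fderiv ℝ (fun t => fderiv ℝ (fun s => K (s, θ₀)) t (Pi.single j 1)) 0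
        (Pi.single i 1))
    (hHpos : H.PosDef)
    (J : Matrix (Fin d) (Fin p) ℝ)
    (hJ : ∀ i j, J i j =
      fderiv ℝ (fun θ' => fderiv ℝ (fun t => K (t, θ')) 0 (Pi.single i 1)) θ₀
        (Pi.single j 1))
    (L2 : Matrix (Fin p) (Fin p) ℝ)
    (hL2 : ∀ i j, L2 i j =
      fderiv ℝ
        (fun θ1 =>
          fderiv ℝ (fun θ2 => K (that θ2, θ2) - ∑ k : Fin d, that θ2 k * x k) θ1
            (Pi.single j 1))
        θ₀ (Pi.single i 1)) :
    L2 = -(Jᵀ * H⁻¹ * J) ∧ (L2.IsNegDef ↔ J.rank = p) := by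
  classical
  have hKd : Differentiable ℝ K := hK.differentiable (by norm_num)
  have hDK : ContDiff ℝ 1 (fderiv ℝ K) := hK.fderiv_right (by norm_num)
  have hDKd : Differentiable ℝ (fderiv ℝ K) := hDK.differentiable one_ne_zero
  set B := fderiv ℝ (fderiv ℝ K) ((0 : Fin d → ℝ), θ₀) with hBdef
  have hsymm : ∀ u v, B u v = B v u := by
    rw [hBdef]
    exact second_derivative_symmetric (fun y => (hKd y).hasFDerivAt)
      ((hDKd ((0 : Fin d → ℝ), θ₀)).hasFDerivAt)
  -- partial derivative conversions
  have hpart1 : ∀ (t : Fin d → ℝ) (θ : Fin p → ℝ) (v : Fin d → ℝ),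
      fderiv ℝ (fun s => K (s, θ)) t v = fderiv ℝ K (t, θ) (v, 0) := by
    intro t θ v
    have h : HasFDerivAt (fun s => K (s, θ))
        ((fderiv ℝ K (t, θ)).comp (ContinuousLinearMap.inl ℝ _ _)) t :=
      (hKd (t, θ)).hasFDerivAt.comp t (hasFDerivAt_prodMk_left t θ)
    rw [h.fderiv]; rfl
  have hpart2 : ∀ (t : Fin d → ℝ) (θ : Fin p → ℝ) (v : Fin p → ℝ),
      fderiv ℝ (fun θ' => K (t, θ')) θ v = fderiv ℝ K (t, θ) (0, v) := by
    intro t θ v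
    have h : HasFDerivAt (fun θ' => K (t, θ'))
        ((fderiv ℝ K (t, θ)).comp (ContinuousLinearMap.inr ℝ _ _)) θ :=
      (hKd (t, θ)).hasFDerivAt.comp θ (hasFDerivAt_prodMk_right t θ)
    rw [h.fderiv]; rfl
  -- differentiability of t̂ on U
  have hthatd : ∀ θ ∈ U, DifferentiableAt ℝ that θ := fun θ hθ =>
    ((hdiff θ hθ).contDiffAt (hU.mem_nhds hθ)).differentiableAt one_ne_zero
  have hhmap : ∀ θ ∈ U, HasFDerivAt (fun θ' => (that θ', θ'))
      ((fderiv ℝ that θ).prod (ContinuousLinearMap.id ℝ (Fin p → ℝ))) θ :=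
    fun θ hθ => HasFDerivAt.prodMk ((hthatd θ hθ).hasFDerivAt) (hasFDerivAt_id θ)
  set T := fderiv ℝ that θ₀ with hTdef
  -- saddle, linearized in the first slot
  have hsad : ∀ θ ∈ U, ∀ u : Fin d → ℝ,
      fderiv ℝ K (that θ, θ) (u, 0) = ∑ k, u k * x k := by
    intro θ hθ u
    rw [clm_fst_expand]
    refine Finset.sum_congr rfl fun k _ => ?_
    rw [← hpart1, hsaddle θ hθ k, smul_eq_mul]
  -- first derivative of the profile function on U
  have claim1 : ∀ θ ∈ U, ∀ v : Fin p → ℝ,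
      fderiv ℝ (fun θ2 => K (that θ2, θ2) - ∑ k : Fin d, that θ2 k * x k) θ v
        = fderiv ℝ K (that θ, θ) (0, v) := by
    intro θ hθ v
    set l : (Fin d → ℝ) →L[ℝ] ℝ := ∑ k, x k • ContinuousLinearMap.proj k with hl
    have hlapp : ∀ u : Fin d → ℝ, l u = ∑ k, u k * x k := by
      intro u
      rw [hl]
      simp [ContinuousLinearMap.sum_apply, mul_comm]
    have h1 : HasFDerivAt (fun θ2 => K (that θ2, θ2))
        ((fderiv ℝ K (that θ, θ)).comp
          ((fderiv ℝ that θ).prod (ContinuousLinearMap.id ℝ (Fin p → ℝ)))) θ :=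
      (hKd _).hasFDerivAt.comp θ (hhmap θ hθ)
    have h2 : HasFDerivAt (fun θ2 => ∑ k : Fin d, that θ2 k * x k)
        (l.comp (fderiv ℝ that θ)) θ := by
      have hfun : (fun θ2 => ∑ k : Fin d, that θ2 k * x k) = fun θ2 => l (that θ2) := by
        funext θ2; rw [hlapp]
      rw [hfun]
      exact l.hasFDerivAt.comp θ (hthatd θ hθ).hasFDerivAt
    rw [(HasFDerivAt.fun_sub h1 h2).fderiv]
    simp only [ContinuousLinearMap.coe_sub', Pi.sub_apply,
      ContinuousLinearMap.comp_apply, ContinuousLinearMap.prod_apply,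
      ContinuousLinearMap.coe_id', id_eq]
    rw [clm_split, hsad θ hθ, hlapp]
    ring
  -- second derivative of the profile function
  have hL2B : ∀ i j, L2 i j = B (T (Pi.single i 1), Pi.single i 1) (0, Pi.single j 1) := by
    intro i j
    rw [hL2 i j]
    have hev : (fun θ1 =>
        fderiv ℝ (fun θ2 => K (that θ2, θ2) - ∑ k : Fin d, that θ2 k * x k) θ1
          (Pi.single j 1))
        =ᶠ[nhds θ₀] fun θ1 => fderiv ℝ K (that θ1, θ1) ((0 : Fin d → ℝ), Pi.single j 1) := by
      filter_upwards [hU.mem_nhds hθ₀U] with θ hθ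
      exact claim1 θ hθ _
    rw [hev.fderiv_eq]
    have h1 : fderiv ℝ (fun θ1 => fderiv ℝ K (that θ1, θ1) ((0 : Fin d → ℝ), Pi.single j 1))
        θ₀ (Pi.single i 1)
        = fderiv ℝ (fderiv ℝ K) (that θ₀, θ₀)
            (((fderiv ℝ that θ₀).prod (ContinuousLinearMap.id ℝ (Fin p → ℝ))) (Pi.single i 1))
            ((0 : Fin d → ℝ), Pi.single j 1) :=
      fderiv_clm_apply_comp (hDKd _) (hhmap θ₀ hθ₀U) _ _
    rw [h1, hthat0, hBdef]
    rfl
  -- differentiating the saddle identity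
  have hsd2 : ∀ i m, B (T (Pi.single m 1), Pi.single m 1) (Pi.single i 1, 0) = 0 := by
    intro i m
    have hev : (fun θ => fderiv ℝ K (that θ, θ) ((Pi.single i 1 : Fin d → ℝ), (0 : Fin p → ℝ)))
        =ᶠ[nhds θ₀] fun _ => x i := by
      filter_upwards [hU.mem_nhds hθ₀U] with θ hθ
      rw [← hpart1]
      exact hsaddle θ hθ i
    have h0 : fderiv ℝ
        (fun θ => fderiv ℝ K (that θ, θ) ((Pi.single i 1 : Fin d → ℝ), (0 : Fin p → ℝ)))
        θ₀ = 0 := by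
      rw [hev.fderiv_eq]
      exact fderiv_const_apply _
    have h1 : fderiv ℝ
        (fun θ => fderiv ℝ K (that θ, θ) ((Pi.single i 1 : Fin d → ℝ), (0 : Fin p → ℝ)))
        θ₀ (Pi.single m 1)
        = fderiv ℝ (fderiv ℝ K) (that θ₀, θ₀)
            (((fderiv ℝ that θ₀).prod (ContinuousLinearMap.id ℝ (Fin p → ℝ))) (Pi.single m 1))
            ((Pi.single i 1 : Fin d → ℝ), (0 : Fin p → ℝ)) :=
      fderiv_clm_apply_comp (hDKd _) (hhmap θ₀ hθ₀U) _ _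
    rw [h0] at h1
    rw [hthat0, ← hBdef, ← hTdef] at h1
    simpa using h1.symm
  -- second θ-derivatives of K vanish at t = 0
  have hK0' : ∀ (θ : Fin p → ℝ) (v : Fin p → ℝ),
      fderiv ℝ K ((0 : Fin d → ℝ), θ) (0, v) = 0 := by
    intro θ v
    rw [← hpart2]
    have hfun : (fun θ' => K ((0 : Fin d → ℝ), θ')) = fun _ => (0 : ℝ) := funext hK0
    rw [hfun, fderiv_fun_const]
    rfl
  have hBθθ : ∀ i j, B ((0 : Fin d → ℝ), Pi.single i 1) ((0 : Fin d → ℝ), Pi.single j 1) = 0 := by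
    intro i j
    have h1 : fderiv ℝ
        (fun θ' : Fin p → ℝ => fderiv ℝ K ((0 : Fin d → ℝ), θ') ((0 : Fin d → ℝ), Pi.single j 1))
        θ₀ (Pi.single i 1)
        = fderiv ℝ (fderiv ℝ K) ((0 : Fin d → ℝ), θ₀)
            ((ContinuousLinearMap.inr ℝ (Fin d → ℝ) (Fin p → ℝ)) (Pi.single i 1))
            ((0 : Fin d → ℝ), Pi.single j 1) :=
      fderiv_clm_apply_comp (hDKd _) (hasFDerivAt_prodMk_right (0 : Fin d → ℝ) θ₀) _ _
    have h0 : (fun θ' : Fin p → ℝ =>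
        fderiv ℝ K ((0 : Fin d → ℝ), θ') ((0 : Fin d → ℝ), Pi.single j 1)) = fun _ => (0 : ℝ) :=
      funext fun θ' => hK0' θ' _
    rw [h0, fderiv_fun_const] at h1
    have h2 := h1.symm
    rw [hBdef]
    simpa using h2
  -- H in terms of B
  have hHB : ∀ i j, H i j = B (Pi.single i 1, 0) (Pi.single j 1, 0) := by
    intro i j
    rw [hH i j]
    have hfun : (fun t => fderiv ℝ (fun s => K (s, θ₀)) t (Pi.single j 1))
        = fun t => fderiv ℝ K (t, θ₀) ((Pi.single j 1 : Fin d → ℝ), (0 : Fin p → ℝ)) :=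
      funext fun t => hpart1 t θ₀ _
    rw [hfun]
    have h1 : fderiv ℝ
        (fun t => fderiv ℝ K (t, θ₀) ((Pi.single j 1 : Fin d → ℝ), (0 : Fin p → ℝ)))
        0 (Pi.single i 1)
        = fderiv ℝ (fderiv ℝ K) ((0 : Fin d → ℝ), θ₀)
            ((ContinuousLinearMap.inl ℝ (Fin d → ℝ) (Fin p → ℝ)) (Pi.single i 1))
            ((Pi.single j 1 : Fin d → ℝ), (0 : Fin p → ℝ)) :=
      fderiv_clm_apply_comp (hDKd _) (hasFDerivAt_prodMk_left (0 : Fin d → ℝ) θ₀) _ _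
    rw [h1, hBdef]
    rfl
  -- J in terms of B
  have hJB : ∀ i j, J i j = B ((0 : Fin d → ℝ), Pi.single j 1) (Pi.single i 1, 0) := by
    intro i j
    rw [hJ i j]
    have hfun : (fun θ' => fderiv ℝ (fun t => K (t, θ')) 0 (Pi.single i 1))
        = fun θ' => fderiv ℝ K ((0 : Fin d → ℝ), θ') ((Pi.single i 1 : Fin d → ℝ), (0 : Fin p → ℝ)) :=
      funext fun θ' => hpart1 0 θ' _
    rw [hfun]
    have h1 : fderiv ℝ
        (fun θ' : Fin p → ℝ =>
          fderiv ℝ K ((0 : Fin d → ℝ), θ') ((Pi.single i 1 : Fin d → ℝ), (0 : Fin p → ℝ)))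
        θ₀ (Pi.single j 1)
        = fderiv ℝ (fderiv ℝ K) ((0 : Fin d → ℝ), θ₀)
            ((ContinuousLinearMap.inr ℝ (Fin d → ℝ) (Fin p → ℝ)) (Pi.single j 1))
            ((Pi.single i 1 : Fin d → ℝ), (0 : Fin p → ℝ)) :=
      fderiv_clm_apply_comp (hDKd _) (hasFDerivAt_prodMk_right (0 : Fin d → ℝ) θ₀) _ _
    rw [h1, hBdef]
    rfl
  -- symmetry of H and H⁻¹
  have hHsymm : ∀ a b, H a b = H b a := by
    intro a b
    have h := congrFun (congrFun hHpos.1 a) b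
    simpa [Matrix.conjTranspose_apply] using h.symm
  have hHinvpos : (H⁻¹).PosDef := hHpos.inv
  have hHinvsymm : ∀ a b, H⁻¹ a b = H⁻¹ b a := by
    intro a b
    have h := congrFun (congrFun hHinvpos.1 a) b
    simpa [Matrix.conjTranspose_apply] using h.symm
  have hdet : IsUnit H.det := (ne_of_gt hHpos.det_pos).isUnit
  -- the key linear relation : H *ᵥ T(eₘ) = - (column m of J)
  have key : ∀ (m : Fin p) (i : Fin d),
      ∑ k, H i k * T (Pi.single m 1) k = - J i m := by
    intro m i
    have e1 : B (T (Pi.single m 1), Pi.single m 1) ((Pi.single i 1 : Fin d → ℝ), (0 : Fin p → ℝ))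
        = (∑ k, T (Pi.single m 1) k * H k i) + J i m := by
      rw [clm_split B (T (Pi.single m 1)) (Pi.single m 1), ContinuousLinearMap.add_apply]
      congr 1
      · rw [clm_fst_expand B (T (Pi.single m 1)), ContinuousLinearMap.sum_apply]
        refine Finset.sum_congr rfl fun k _ => ?_
        rw [ContinuousLinearMap.smul_apply, smul_eq_mul, ← hHB k i]
      · rw [← hJB i m]
    rw [hsd2 i m] at e1
    have e2 : ∑ k, T (Pi.single m 1) k * H k i = - J i m := by linarith [e1.symm]
    calc ∑ k, H i k * T (Pi.single m 1) k
        = ∑ k, T (Pi.single m 1) k * H k i := by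
          refine Finset.sum_congr rfl fun k _ => ?_
          rw [hHsymm i k]; ring
      _ = - J i m := e2
  -- solve for T(eₘ)
  have hw : ∀ (m : Fin p) (k : Fin d),
      T (Pi.single m 1) k = - ∑ l, H⁻¹ k l * J l m := by
    intro m k
    have h1 : H *ᵥ T (Pi.single m 1) = fun i => - J i m := by
      funext i
      simpa [Matrix.mulVec, dotProduct] using key m i
    have h2 : T (Pi.single m 1) = H⁻¹ *ᵥ (fun i => - J i m) := by
      rw [← h1, Matrix.mulVec_mulVec, Matrix.nonsing_inv_mul H hdet, Matrix.one_mulVec]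
    rw [h2]
    simp [Matrix.mulVec, dotProduct, mul_neg, Finset.sum_neg_distrib]
  -- entries of L2
  have hL2e : ∀ i j, L2 i j = ∑ k, T (Pi.single i 1) k * J k j := by
    intro i j
    rw [hL2B i j, clm_split B (T (Pi.single i 1)) (Pi.single i 1),
      ContinuousLinearMap.add_apply, hBθθ i j, add_zero,
      clm_fst_expand B (T (Pi.single i 1)), ContinuousLinearMap.sum_apply]
    refine Finset.sum_congr rfl fun k _ => ?_
    rw [ContinuousLinearMap.smul_apply, smul_eq_mul, hsymm, ← hJB k j]
  -- the matrix identity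
  have hL2eq : L2 = -(Jᵀ * H⁻¹ * J) := by
    ext i j
    rw [hL2e i j]
    have : ∀ k, T (Pi.single i 1) k * J k j = - ∑ l, H⁻¹ k l * J l i * J k j := by
      intro k
      rw [hw i k, neg_mul, Finset.sum_mul]
    rw [Finset.sum_congr rfl fun k _ => this k, Finset.sum_neg_distrib]
    simp only [Matrix.neg_apply, Matrix.mul_apply, Matrix.transpose_apply, neg_inj,
      Finset.sum_mul]
    refine Finset.sum_congr rfl fun k _ => ?_
    refine Finset.sum_congr rfl fun l _ => ?_
    rw [hHinvsymm k l]
    ring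
  -- quadratic form
  have hquad : ∀ v : Fin p → ℝ, v ⬝ᵥ L2 *ᵥ v = -((J *ᵥ v) ⬝ᵥ H⁻¹ *ᵥ (J *ᵥ v)) := by
    intro v
    rw [hL2eq, Matrix.neg_mulVec, dotProduct_neg, ← Matrix.mulVec_mulVec,
      ← Matrix.mulVec_mulVec, Matrix.dotProduct_mulVec, Matrix.vecMul_transpose]
  -- rank criterion
  have hrank : J.rank = p ↔ ∀ v : Fin p → ℝ, J *ᵥ v = 0 → v = 0 := by
    have hfr : J.rank + Module.finrank ℝ (LinearMap.ker J.mulVecLin) = p := by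
      rw [Matrix.rank]
      rw [LinearMap.finrank_range_add_finrank_ker J.mulVecLin, Module.finrank_fin_fun]
    constructor
    · intro hr v hv
      have h0 : Module.finrank ℝ (LinearMap.ker J.mulVecLin) = 0 := by omega
      have hker : LinearMap.ker J.mulVecLin = ⊥ := Submodule.finrank_eq_zero.mp h0
      have := LinearMap.ker_eq_bot'.mp hker v
      exact this (by rwa [Matrix.mulVecLin_apply])
    · intro hinj
      have hker : LinearMap.ker J.mulVecLin = ⊥ := by
        rw [LinearMap.ker_eq_bot']
        intro v hv
        exact hinj v (by rwa [Matrix.mulVecLin_apply] at hv)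
      rw [hker] at hfr
      simpa using hfr
  refine ⟨hL2eq, ?_, ?_⟩
  · rintro ⟨hsym, hneg⟩
    rw [hrank]
    intro v hv
    by_contra hv0
    have := hneg v hv0
    rw [hquad, hv] at this
    simp at this
  · intro hr
    constructor
    · have hHT : (H⁻¹)ᵀ = H⁻¹ := by
        ext a b
        rw [Matrix.transpose_apply]
        exact hHinvsymm b a
      show L2ᵀ = L2
      rw [hL2eq, Matrix.transpose_neg, Matrix.transpose_mul, Matrix.transpose_mul,
        Matrix.transpose_transpose, hHT, Matrix.mul_assoc]
    · intro v hv
      rw [hquad]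
      have hJv : J *ᵥ v ≠ 0 := fun h0 => hv (hrank.mp hr v h0)
      have := hHinvpos.dotProduct_mulVec_pos hJv
      have hstar : star (J *ᵥ v) = J *ᵥ v := by simp
      rw [hstar] at this
      linarith
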